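/- If B = H⊗g + S is the decomposition of a symmetric bilinear form B on a 2-dimensional inner product space V with values in a normal space W, where g is the metric, H = (1/2)·trace_g(B) ∈ W, and S is trace-free, and if the contraction ∑_{i,j} ⟨H, S(e_i,e_j)⟩ S(e_i,e_j) = 0 over an orthonormal basis {e_i}, then ⟨H, S(X,Y)⟩ = 0 for all X, Y ∈ V. -/
import Mathlib


open scoped RealInnerProductSpace

/-- if `B = H ⊗ g + S` with `S` trace-free on a 2-dimensional inner product
space, and the contraction `∑ᵢⱼ ⟪H, S(eᵢ,eⱼ)⟫ • S(eᵢ,eⱼ)` vanishes, then `⟪H, S(X,Y)⟫ = 0`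
for all `X, Y`. -/
theorem stmt_0 {V W : Type*}
    [NormedAddCommGroup V] [InnerProductSpace ℝ V]
    [NormedAddCommGroup W] [InnerProductSpace ℝ W]
    (b : OrthonormalBasis (Fin 2) ℝ V)
    (B : V →ₗ[ℝ] V →ₗ[ℝ] W) (hBsymm : ∀ X Y : V, B X Y = B Y X)
    (H : W) (hH : H = (1 / 2 : ℝ) • (B (b 0) (b 0) + B (b 1) (b 1)))
    (S : V → V → W) (hS : ∀ X Y : V, S X Y = B X Y - ⟪X, Y⟫ • H)
    (hcontr : ∑ i : Fin 2, ∑ j : Fin 2, ⟪H, S (b i) (b j)⟫ • S (b i) (b j) = 0) :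
    ∀ X Y : V, ⟪H, S X Y⟫ = 0 := by
  -- each ⟪H, S (b i) (b j)⟫ vanishes
  have key : ∀ i j : Fin 2, ⟪H, S (b i) (b j)⟫ = 0 := by
    have h0 : ⟪H, ∑ i : Fin 2, ∑ j : Fin 2, ⟪H, S (b i) (b j)⟫ • S (b i) (b j)⟫ = 0 := by
      rw [hcontr, inner_zero_right]
    have h1 : ∑ i : Fin 2, ∑ j : Fin 2, ⟪H, S (b i) (b j)⟫ ^ 2 = 0 := by
      rw [← h0, inner_sum]
      refine Finset.sum_congr rfl fun i _ => ?_
      rw [inner_sum]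
      refine Finset.sum_congr rfl fun j _ => ?_
      rw [real_inner_smul_right]; ring
    intro i j
    have hij : ⟪H, S (b i) (b j)⟫ ^ 2 = 0 := by
      have h2 := (Finset.sum_eq_zero_iff_of_nonneg (fun i _ =>
        Finset.sum_nonneg fun j _ => sq_nonneg _)).mp h1 i (Finset.mem_univ i)
      exact (Finset.sum_eq_zero_iff_of_nonneg (fun j _ => sq_nonneg _)).mp h2 j
        (Finset.mem_univ j)
    exact pow_eq_zero_iff (n := 2) (by norm_num) |>.mp hij
  intro X Y
  have hX : X = ∑ i : Fin 2, ⟪b i, X⟫ • b i := (b.sum_repr' X).symm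
  have hY : Y = ∑ j : Fin 2, ⟪b j, Y⟫ • b j := (b.sum_repr' Y).symm
  have hSXY : ⟪H, S X Y⟫ = ⟪H, B X Y⟫ - ⟪X, Y⟫ * ⟪H, H⟫ := by
    rw [hS, inner_sub_right, real_inner_smul_right]
  have hkey' : ∀ i j : Fin 2, ⟪H, B (b i) (b j)⟫ = ⟪b i, b j⟫ * ⟪H, H⟫ := by
    intro i j
    have := key i j
    rw [hS, inner_sub_right, real_inner_smul_right, sub_eq_zero] at this
    exact this
  have hBXY : ⟪H, B X Y⟫ = ∑ i : Fin 2, ∑ j : Fin 2,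
      ⟪b i, X⟫ * ⟪b j, Y⟫ * ⟪H, B (b i) (b j)⟫ := by
    conv_lhs => rw [hX, hY]
    simp only [map_sum, map_smul, LinearMap.sum_apply, LinearMap.smul_apply, inner_sum,
      inner_smul_right]
    rw [Finset.sum_comm]
    refine Finset.sum_congr rfl fun i _ => ?_
    rw [Finset.mul_sum]
    exact Finset.sum_congr rfl fun j _ => by ring
  have hXY : ⟪X, Y⟫ = ∑ i : Fin 2, ∑ j : Fin 2,
      ⟪b i, X⟫ * ⟪b j, Y⟫ * ⟪b i, b j⟫ := by
    conv_lhs => rw [hX, hY]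
    rw [sum_inner]
    refine Finset.sum_congr rfl fun i _ => ?_
    rw [real_inner_smul_left, inner_sum, Finset.mul_sum]
    refine Finset.sum_congr rfl fun j _ => ?_
    rw [real_inner_smul_right]; ring
  rw [hSXY, hBXY, hXY, Finset.sum_mul, ← Finset.sum_sub_distrib]
  refine Finset.sum_eq_zero fun i _ => ?_
  rw [Finset.sum_mul, ← Finset.sum_sub_distrib]
  refine Finset.sum_eq_zero fun j _ => ?_
  rw [hkey' i j]; ring
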